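/- Every trace-zero matrix in M_d(ℂ) is a commutator: if A ∈ M_d(ℂ) satisfies Tr(A) = 0, then there exist X, Y ∈ M_d(ℂ) with A = XY − YX. -/

import Mathlib

open Matrix

lemma zero_diag_commutator (d : ℕ) (B : Matrix (Fin d) (Fin d) ℂ)
    (hB : ∀ i, B i i = 0) :
    ∃ X Y : Matrix (Fin d) (Fin d) ℂ, B = X * Y - Y * X := by
  refine ⟨Matrix.diagonal (fun i => (i : ℂ)), Matrix.of (fun i j => if i = j then 0 else B i j / ((i : ℂ) - (j : ℂ))), ?_⟩
  ext i j
  rw [Matrix.sub_apply, Matrix.diagonal_mul, Matrix.mul_diagonal]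
  by_cases h : i = j
  · subst h; simp [hB]
  · have hij : (i : ℂ) ≠ (j : ℂ) := by
      simp only [ne_eq, Nat.cast_inj]
      exact_mod_cast fun hc => h (Fin.ext hc)
    have : ((i:ℂ) - j) ≠ 0 := sub_ne_zero.mpr hij
    simp only [Matrix.of_apply, if_neg h]
    field_simp

lemma scalar_of_all_eigen (d : ℕ) (A : Matrix (Fin (d+1)) (Fin (d+1)) ℂ)
    (H : ∀ v : Fin (d+1) → ℂ, ∃ c : ℂ, A.mulVec v = c • v) :
    ∃ c : ℂ, A = c • (1 : Matrix (Fin (d+1)) (Fin (d+1)) ℂ) := by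
  have col : ∀ i j, A.mulVec (Pi.single i 1) j = A j i := by
    intro i j
    simp [Matrix.mulVec_single]
  choose c hc using H
  set e : Fin (d+1) → (Fin (d+1) → ℂ) := fun i => Pi.single i 1 with he
  -- all c (e i) are equal
  have key : ∀ i j : Fin (d+1), c (e i) = c (e j) := by
    intro i j
    by_cases hij : i = j
    · rw [hij]
    have hcc := hc (e i + e j)
    have hsum : A.mulVec (e i + e j) = c (e i) • e i + c (e j) • e j := by
      rw [Matrix.mulVec_add, hc, hc]
    rw [hcc] at hsum
    have hi := congrFun hsum i
    have hj := congrFun hsum j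
    simp [he, Pi.single_apply, hij, Ne.symm hij] at hi hj
    exact hi.symm.trans hj
  refine ⟨c (e 0), ?_⟩
  ext j i
  have : A j i = c (e i) * (if j = i then 1 else 0) := by
    rw [← col i j, hc (e i)]
    simp [he, Pi.single_apply]
  rw [this, key i 0]
  simp [Matrix.one_apply, Matrix.smul_apply]

lemma exists_basis_two (d : ℕ) (w : Fin 2 → (Fin (d+1) → ℂ)) (hw : LinearIndependent ℂ w) :
    ∃ b : Module.Basis (Fin (d+1)) ℂ (Fin (d+1) → ℂ), b 0 = w 0 ∧ b 1 = w 1 := by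
  classical
  set W : Submodule ℂ (Fin (d+1) → ℂ) := Submodule.span ℂ (Set.range w) with hWdef
  obtain ⟨W', hcompl⟩ := Submodule.exists_isCompl W
  let bW : Module.Basis (Fin 2) ℂ W := Module.Basis.span hw
  let m := Module.finrank ℂ W'
  let bW' : Module.Basis (Fin m) ℂ W' := Module.finBasis ℂ W'
  let b1 : Module.Basis (Fin 2 ⊕ Fin m) ℂ (Fin (d+1) → ℂ) :=
    (bW.prod bW').map (Submodule.prodEquivOfIsCompl W W' hcompl)
  have hb1 : ∀ i : Fin 2, b1 (Sum.inl i) = w i := by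
    intro i
    simp only [b1, Module.Basis.map_apply, Module.Basis.prod_apply]
    rw [Submodule.coe_prodEquivOfIsCompl']
    simp
    exact congrArg Subtype.val (Module.Basis.span_apply hw i)
  have h2 : 2 + m = d + 1 := by
    have := Submodule.finrank_add_eq_of_isCompl hcompl
    rw [hWdef, finrank_span_eq_card hw] at this
    simpa [m, Fintype.card_fin] using this
  have hd : 0 < d := by omega
  let e : (Fin 2 ⊕ Fin m) ≃ Fin (d+1) := finSumFinEquiv.trans (finCongr h2)
  refine ⟨b1.reindex e, ?_, ?_⟩
  · have : e.symm 0 = Sum.inl 0 := by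
      rw [Equiv.symm_apply_eq]; apply Fin.ext; simp [e, Nat.mod_eq_of_lt, hd]
    rw [Module.Basis.reindex_apply, this, hb1]
  · have : e.symm 1 = Sum.inl 1 := by
      rw [Equiv.symm_apply_eq]; apply Fin.ext; simp [e, Nat.mod_eq_of_lt, hd]
    rw [Module.Basis.reindex_apply, this, hb1]

def extM {d : ℕ} (Q : Matrix (Fin d) (Fin d) ℂ) : Matrix (Fin (d+1)) (Fin (d+1)) ℂ :=
  Matrix.of fun i j =>
    Fin.cases (Fin.cases 1 (fun _ => 0) j) (fun i' => Fin.cases 0 (fun j' => Q i' j') j) i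

@[simp] lemma extM_zz {d : ℕ} (Q : Matrix (Fin d) (Fin d) ℂ) : extM Q 0 0 = 1 := rfl
@[simp] lemma extM_zs {d : ℕ} (Q : Matrix (Fin d) (Fin d) ℂ) (j : Fin d) : extM Q 0 j.succ = 0 := rfl
@[simp] lemma extM_sz {d : ℕ} (Q : Matrix (Fin d) (Fin d) ℂ) (i : Fin d) : extM Q i.succ 0 = 0 := rfl
@[simp] lemma extM_ss {d : ℕ} (Q : Matrix (Fin d) (Fin d) ℂ) (i j : Fin d) : extM Q i.succ j.succ = Q i j := rfl

lemma extM_mul {d : ℕ} (Q Q' : Matrix (Fin d) (Fin d) ℂ) :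
    extM Q * extM Q' = extM (Q * Q') := by
  ext i j
  rw [Matrix.mul_apply, Fin.sum_univ_succ]
  induction i using Fin.cases with
  | zero =>
    induction j using Fin.cases with
    | zero => simp
    | succ j => simp
  | succ i =>
    induction j using Fin.cases with
    | zero => simp
    | succ j => simp [Matrix.mul_apply]

@[simp] lemma extM_one {d : ℕ} : extM (1 : Matrix (Fin d) (Fin d) ℂ) = 1 := by
  ext i j
  induction i using Fin.cases with
  | zero =>
    induction j using Fin.cases with
    | zero => simp
    | succ j => simp [Matrix.one_apply, (Fin.succ_ne_zero j).symm]
  | succ i =>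
    induction j using Fin.cases with
    | zero => simp [Matrix.one_apply, Fin.succ_ne_zero i]
    | succ j => simp [Matrix.one_apply, Fin.succ_injective _ |>.eq_iff]

lemma extM_conj_zero {d : ℕ} (Q Q' : Matrix (Fin d) (Fin d) ℂ)
    (M : Matrix (Fin (d+1)) (Fin (d+1)) ℂ) :
    (extM Q' * M * extM Q) 0 0 = M 0 0 := by
  rw [Matrix.mul_apply, Fin.sum_univ_succ]
  simp only [extM_zz, extM_sz, mul_one, mul_zero, Finset.sum_const_zero, add_zero]
  rw [Matrix.mul_apply, Fin.sum_univ_succ]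
  simp

lemma extM_conj_succ {d : ℕ} (Q Q' : Matrix (Fin d) (Fin d) ℂ)
    (M : Matrix (Fin (d+1)) (Fin (d+1)) ℂ) (i j : Fin d) :
    (extM Q' * M * extM Q) i.succ j.succ = (Q' * (M.submatrix Fin.succ Fin.succ) * Q) i j := by
  rw [Matrix.mul_apply, Fin.sum_univ_succ]
  simp only [extM_zs, mul_zero, zero_add, extM_ss]
  conv_rhs => rw [Matrix.mul_apply]
  refine Finset.sum_congr rfl fun k _ => ?_
  congr 1
  rw [Matrix.mul_apply, Fin.sum_univ_succ]
  simp only [extM_sz, zero_mul, extM_ss, mul_zero, zero_add]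
  conv_rhs => rw [Matrix.mul_apply]
  simp [Matrix.submatrix_apply]

lemma exists_conj_zero_diag : ∀ (d : ℕ) (A : Matrix (Fin d) (Fin d) ℂ), Matrix.trace A = 0 →
    ∃ P : Matrix (Fin d) (Fin d) ℂ, IsUnit P.det ∧ ∀ i, (P⁻¹ * A * P) i i = 0 := by
  intro d
  induction d with
  | zero => exact fun A _ => ⟨1, by simp, fun i => i.elim0⟩
  | succ d IH =>
    intro A hA
    by_cases hsc : ∀ v : Fin (d+1) → ℂ, ∃ c : ℂ, A.mulVec v = c • v
    · obtain ⟨c, rfl⟩ := scalar_of_all_eigen d A hsc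
      have hc : c = 0 := by
        rw [Matrix.trace_smul, Matrix.trace_one] at hA
        have hne : ((d : ℂ) + 1) ≠ 0 := Nat.cast_add_one_ne_zero d
        simp only [Fintype.card_fin, Nat.cast_add, Nat.cast_one, smul_eq_mul] at hA
        exact (mul_eq_zero.mp hA).resolve_right hne
      subst hc
      exact ⟨1, by simp, fun i => by simp⟩
    · push_neg at hsc
      obtain ⟨v, hv⟩ := hsc
      have hv0 : v ≠ 0 := by
        intro h
        exact hv 0 (by simp [h])
      have hli : LinearIndependent ℂ ![v, A.mulVec v] := by
        rw [linearIndependent_fin2]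
        constructor
        · intro h
          simp only [Matrix.cons_val_one, Matrix.head_cons, Matrix.cons_val_zero] at h
          exact hv 0 (by simp [h])
        · intro a h
          simp only [Matrix.cons_val_one, Matrix.head_cons, Matrix.cons_val_zero] at h
          have ha : a ≠ 0 := by
            intro h0; rw [h0, zero_smul] at h; exact hv0 h.symm
          exact hv a⁻¹ ((inv_smul_eq_iff₀ ha).mpr h.symm).symm
      have hd : 0 < d := by
        have h2 := hli.fintype_card_le_finrank (R := ℂ)
        rw [Module.finrank_fin_fun] at h2
        simp only [Fintype.card_fin] at h2
        omega
      have h01 : (0 : Fin (d+1)) ≠ 1 := by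
        intro h
        have := congrArg Fin.val h
        simp [Fin.val_one, Nat.mod_eq_of_lt (by omega : 1 < d + 1)] at this
      obtain ⟨b, hb0, hb1⟩ := exists_basis_two d ![v, A.mulVec v] hli
      simp only [Matrix.cons_val_zero, Matrix.cons_val_one, Matrix.head_cons] at hb0 hb1
      set P : Matrix (Fin (d+1)) (Fin (d+1)) ℂ := (Pi.basisFun ℂ (Fin (d+1))).toMatrix ⇑b with hP
      have : Invertible P := (Pi.basisFun ℂ (Fin (d+1))).invertibleToMatrix b
      have hPdet : IsUnit P.det := Matrix.isUnit_det_of_invertible P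
      have hPcol : ∀ j i, P i j = b j i := by
        intro j i
        simp [hP, Module.Basis.toMatrix_apply]
      set M : Matrix (Fin (d+1)) (Fin (d+1)) ℂ := P⁻¹ * A * P with hM
      have hM00 : M 0 0 = 0 := by
        have hAP : ∀ k, (A * P) k 0 = P k 1 := by
          intro k
          rw [Matrix.mul_apply]
          have : ∀ l, P l 0 = v l := fun l => by rw [hPcol, hb0]
          simp_rw [this]
          rw [hPcol, hb1]
          rfl
        have : M 0 0 = ∑ k, P⁻¹ 0 k * (A * P) k 0 := by
          rw [hM, Matrix.mul_assoc, Matrix.mul_apply]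
        rw [this]
        simp_rw [hAP]
        have : ∑ k, P⁻¹ 0 k * P k 1 = (P⁻¹ * P) 0 1 := (Matrix.mul_apply).symm
        rw [this, Matrix.nonsing_inv_mul P hPdet]
        simp [Matrix.one_apply, h01]
      have htrM : Matrix.trace M = 0 := by
        rw [hM, Matrix.trace_mul_comm (P⁻¹ * A) P, ← Matrix.mul_assoc,
          Matrix.mul_nonsing_inv P hPdet, Matrix.one_mul, hA]
      set C := M.submatrix Fin.succ Fin.succ with hC
      have htrC : Matrix.trace C = 0 := by
        have : Matrix.trace M = M 0 0 + Matrix.trace C := by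
          rw [Matrix.trace, Matrix.trace, Fin.sum_univ_succ]
          rfl
        rw [htrM, hM00, zero_add] at this
        exact this.symm
      obtain ⟨Q, hQdet, hQ⟩ := IH C htrC
      have hQinv : extM Q * extM Q⁻¹ = 1 := by
        rw [extM_mul, Matrix.mul_nonsing_inv Q hQdet, extM_one]
      have hEdet : IsUnit (extM Q).det := Matrix.isUnit_det_of_right_inverse hQinv
      have hEinv : (extM Q)⁻¹ = extM Q⁻¹ := Matrix.inv_eq_right_inv hQinv
      refine ⟨P * extM Q, by rw [Matrix.det_mul]; exact hPdet.mul hEdet, ?_⟩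
      have hfin : (P * extM Q)⁻¹ * A * (P * extM Q) = extM Q⁻¹ * M * extM Q := by
        rw [Matrix.mul_inv_rev, hEinv, hM]
        simp only [Matrix.mul_assoc]
      rw [hfin]
      intro i
      induction i using Fin.cases with
      | zero => rw [extM_conj_zero]; exact hM00
      | succ i => rw [extM_conj_succ]; exact hQ i

/-- Shoda, Albert–Muckenhoupt: every trace-zero matrix in `M_d(ℂ)` is a
commutator. -/
theorem traceless_is_commutator (d : ℕ) (A : Matrix (Fin d) (Fin d) ℂ)
    (hA : Matrix.trace A = 0) :
    ∃ X Y : Matrix (Fin d) (Fin d) ℂ, A = X * Y - Y * X := by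
  obtain ⟨P, hPdet, hdiag⟩ := exists_conj_zero_diag d A hA
  obtain ⟨X, Y, hXY⟩ := zero_diag_commutator d (P⁻¹ * A * P) hdiag
  refine ⟨P * X * P⁻¹, P * Y * P⁻¹, ?_⟩
  have e1 : ∀ U V : Matrix (Fin d) (Fin d) ℂ,
      (P * U * P⁻¹) * (P * V * P⁻¹) = P * (U * V) * P⁻¹ := by
    intro U V
    simp only [Matrix.mul_assoc, Matrix.nonsing_inv_mul_cancel_left _ _ hPdet]
  rw [e1, e1, ← Matrix.sub_mul, ← Matrix.mul_sub, ← hXY]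
  simp only [Matrix.mul_assoc, Matrix.nonsing_inv_mul_cancel_left _ _ hPdet,
    Matrix.mul_nonsing_inv_cancel_left _ _ hPdet, Matrix.mul_nonsing_inv _ hPdet,
    Matrix.mul_one]
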